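/- Let A and B be nonempty closed convex subsets of X, and let U := {u ∈ X : u ≠ 0 and ⟪a, u⟫ ≤ ⟪b, u⟫ for all a ∈ A and all b ∈ B}. Then for every u ∈ U one has (rec A) ∩ (rec B) ⊆ {u}^⊥, i.e. every vector in (rec A) ∩ (rec B) is orthogonal to every separating functional u. -/

import Mathlib

open Filter Topology

variable {X : Type*} [NormedAddCommGroup X] [InnerProductSpace ℝ X] [FiniteDimensional ℝ X]

/-- The recession cone `rec S = {x : x + S ⊆ S}` of a set `S`. -/
def recCone (S : Set X) : Set X := {x : X | ∀ s ∈ S, x + s ∈ S}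

lemma recCone_nsmul {S : Set X} {x : X} (hx : x ∈ recCone S) {s : X} (hs : s ∈ S) :
    ∀ n : ℕ, (n : ℝ) • x + s ∈ S := by
  intro n
  induction n with
  | zero => simpa using hs
  | succ k ih =>
      have := hx _ ih
      have h : ((k : ℝ) + 1) • x + s = x + ((k : ℝ) • x + s) := by
        rw [add_smul, one_smul]; abel
      simpa [h] using this

/-- Every vector in `(rec A) ∩ (rec B)` is orthogonal to every
oriented functional separating `A` and `B`. -/
theorem stmt3 (A B : Set X) (hAne : A.Nonempty) (hAcl : IsClosed A) (hAconv : Convex ℝ A)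
    (hBne : B.Nonempty) (hBcl : IsClosed B) (hBconv : Convex ℝ B) :
    ∀ u ∈ {u : X | u ≠ 0 ∧ ∀ a ∈ A, ∀ b ∈ B, (inner ℝ a u : ℝ) ≤ (inner ℝ b u : ℝ)},
      recCone A ∩ recCone B ⊆ {x : X | (inner ℝ x u : ℝ) = 0} := by
  rintro u ⟨-, hsep⟩ x ⟨hxA, hxB⟩
  obtain ⟨a, ha⟩ := hAne
  obtain ⟨b, hb⟩ := hBne
  have key : ∀ n : ℕ, (n : ℝ) * (inner ℝ x u : ℝ) ≤ (inner ℝ b u : ℝ) - (inner ℝ a u : ℝ) ∧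
      -((n : ℝ) * (inner ℝ x u : ℝ)) ≤ (inner ℝ b u : ℝ) - (inner ℝ a u : ℝ) := by
    intro n
    have h1 := hsep _ (recCone_nsmul hxA ha n) b hb
    have h2 := hsep a ha _ (recCone_nsmul hxB hb n)
    rw [inner_add_left, real_inner_smul_left] at h1 h2
    constructor <;> linarith
  by_contra hne
  have hpos : 0 < |(inner ℝ x u : ℝ)| := abs_pos.mpr hne
  obtain ⟨n, hn⟩ := exists_nat_gt (((inner ℝ b u : ℝ) - (inner ℝ a u : ℝ)) / |(inner ℝ x u : ℝ)|)
  have hn' : (inner ℝ b u : ℝ) - (inner ℝ a u : ℝ) < (n : ℝ) * |(inner ℝ x u : ℝ)| := by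
    rwa [div_lt_iff₀ hpos] at hn
  obtain ⟨h1, h2⟩ := key n
  rcases abs_cases (inner ℝ x u : ℝ) with ⟨he, -⟩ | ⟨he, -⟩ <;> rw [he] at hn' <;> nlinarith
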